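/- If ω : X₁ × X₂ → (0, ∞) is locally integrable and satisfies the strong A₁ condition M_s ω(x) ≤ C₀ ω(x) for μ-almost every x ∈ X₁ × X₂, then log ω belongs to little bmo(X₁ × X₂), with ‖log ω‖_bmo bounded by a constant depending only on C₀ and the doubling constants of μ₁ and μ₂. -/

import Mathlib

open MeasureTheory Metric ENNReal

/-- The strong maximal operator on a product space, acting on `ℝ≥0∞`-valued functions:
the supremum of averages over all rectangles (products of balls) containing the point. -/
noncomputable def strongMaxFnE {X₁ : Type*} [MetricSpace X₁] [MeasurableSpace X₁]
    {X₂ : Type*} [MetricSpace X₂] [MeasurableSpace X₂]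
    (μ : Measure (X₁ × X₂)) (g : X₁ × X₂ → ℝ≥0∞) (p : X₁ × X₂) : ℝ≥0∞ :=
  ⨆ (x₁ : X₁) (r₁ : ℝ) (_ : 0 < r₁) (x₂ : X₂) (r₂ : ℝ) (_ : 0 < r₂)
    (_ : p ∈ ball x₁ r₁ ×ˢ ball x₂ r₂),
      (μ (ball x₁ r₁ ×ˢ ball x₂ r₂))⁻¹ *
        ∫⁻ q in ball x₁ r₁ ×ˢ ball x₂ r₂, g q ∂μ

/-- Mean oscillation of `f` over a set `R`, normalised by the measure of `R`. -/
noncomputable def meanOsc {Y : Type*} [MeasurableSpace Y]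
    (μ : Measure Y) (f : Y → ℝ) (R : Set Y) : ℝ :=
  (μ R).toReal⁻¹ * ∫ p in R, |f p - (μ R).toReal⁻¹ * ∫ q in R, f q ∂μ| ∂μ

/-- Iterated doubling estimate. -/
lemma doubling_pow_aux {X : Type*} [MetricSpace X] [MeasurableSpace X]
    (μ : Measure X) (C : ℝ)
    (hdbl : ∀ (x : X) (r : ℝ), 0 < r →
      μ (ball x (2 * r)) ≤ ENNReal.ofReal C * μ (ball x r)) :
    ∀ (j : ℕ) (x : X) (r : ℝ), 0 < r →
      μ (ball x (2 ^ j * r)) ≤ (ENNReal.ofReal C) ^ j * μ (ball x r) := by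
  intro j
  induction j with
  | zero => intro x r _; simp
  | succ n ih =>
    intro x r hr
    have h1 : (2:ℝ) ^ (n+1) * r = 2 * (2 ^ n * r) := by ring
    rw [h1]
    calc μ (ball x (2 * (2 ^ n * r)))
        ≤ ENNReal.ofReal C * μ (ball x (2 ^ n * r)) := hdbl x _ (by positivity)
      _ ≤ ENNReal.ofReal C * ((ENNReal.ofReal C) ^ n * μ (ball x r)) :=
          by gcongr; exact ih x r hr
      _ = (ENNReal.ofReal C) ^ (n+1) * μ (ball x r) := by ring

/-- A metric space with a doubling measure (positive and finite on balls) is separable. -/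
lemma separable_of_doubling_aux {X : Type*} [MetricSpace X] [MeasurableSpace X]
    [BorelSpace X] (μ : Measure X) (C : ℝ) (hC : 1 ≤ C)
    (hdbl : ∀ (x : X) (r : ℝ), 0 < r →
      μ (ball x (2 * r)) ≤ ENNReal.ofReal C * μ (ball x r))
    (hpos : ∀ (x : X) (r : ℝ), 0 < r → 0 < μ (ball x r))
    (hfin : ∀ (x : X) (r : ℝ), 0 < r → μ (ball x r) < ⊤) :
    TopologicalSpace.SeparableSpace X := by
  classical
  rcases isEmpty_or_nonempty X with hX | hX
  · infer_instance
  obtain ⟨x₀⟩ := hX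
  have htb : ∀ ρ : ℝ, 0 < ρ → TotallyBounded (ball x₀ ρ) := by
    intro ρ hρ
    rw [Metric.totallyBounded_iff]
    intro ε hε
    obtain ⟨j, hj⟩ := pow_unbounded_of_one_lt ((2*ρ + ε)/(ε/2)) (one_lt_two (α := ℝ))
    have hCpos : (0:ℝ≥0∞) < ENNReal.ofReal C := by
      rw [ENNReal.ofReal_pos]; linarith
    have hCj_ne0 : (ENNReal.ofReal C) ^ j ≠ 0 := pow_ne_zero j hCpos.ne'
    have hCj_netop : (ENNReal.ofReal C) ^ j ≠ ⊤ := ENNReal.pow_ne_top ENNReal.ofReal_ne_top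
    set Mb : ℝ≥0∞ := μ (ball x₀ (ρ + ε)) with hMbdef
    have hMbpos : 0 < Mb := hpos _ _ (by linarith)
    have hMbfin : Mb < ⊤ := hfin _ _ (by linarith)
    set δ : ℝ≥0∞ := ((ENNReal.ofReal C) ^ j)⁻¹ * Mb with hδdef
    have hδpos : 0 < δ :=
      ENNReal.mul_pos (ENNReal.inv_ne_zero.2 hCj_netop) hMbpos.ne'
    have hδtop : δ ≠ ⊤ :=
      ENNReal.mul_ne_top (ENNReal.inv_ne_top.2 hCj_ne0) hMbfin.ne
    have hlow : ∀ s ∈ ball x₀ ρ, δ ≤ μ (ball s (ε/2)) := by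
      intro s hs
      have hsub : ball x₀ (ρ + ε) ⊆ ball s (2^j * (ε/2)) := by
        intro y hy
        rw [mem_ball] at *
        have h1 : dist y s ≤ dist y x₀ + dist x₀ s := dist_triangle _ _ _
        have h2 : dist x₀ s < ρ := by rw [dist_comm]; exact hs
        have h3 : (2*ρ + ε) < 2^j * (ε/2) := by
          rw [div_lt_iff₀ (by positivity)] at hj
          linarith
        linarith
      calc δ = ((ENNReal.ofReal C) ^ j)⁻¹ * μ (ball x₀ (ρ + ε)) := rfl
        _ ≤ ((ENNReal.ofReal C) ^ j)⁻¹ * μ (ball s (2^j * (ε/2))) :=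
            by gcongr
        _ ≤ ((ENNReal.ofReal C) ^ j)⁻¹ * ((ENNReal.ofReal C) ^ j * μ (ball s (ε/2))) :=
            by gcongr; exact doubling_pow_aux μ C hdbl j s (ε/2) (by positivity)
        _ = μ (ball s (ε/2)) := by
            rw [← mul_assoc, ENNReal.inv_mul_cancel hCj_ne0 hCj_netop, one_mul]
    set N : ℕ := Nat.floor ((Mb / δ).toReal) with hNdef
    set Q : ℕ → Prop := fun n => ∃ t : Finset X, ↑t ⊆ ball x₀ ρ ∧
      (∀ a ∈ t, ∀ b ∈ t, a ≠ b → ε ≤ dist a b) ∧ t.card = n with hQdef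
    have hcard : ∀ t : Finset X, ↑t ⊆ ball x₀ ρ →
        (∀ a ∈ t, ∀ b ∈ t, a ≠ b → ε ≤ dist a b) → t.card ≤ N := by
      intro t ht hsep
      have hdisj : (↑t : Set X).PairwiseDisjoint (fun s => ball s (ε/2)) := by
        intro a ha b hb hab
        exact ball_disjoint_ball (by linarith [hsep a ha b hb hab])
      have hm : (t.card : ℝ≥0∞) * δ ≤ Mb := by
        calc (t.card : ℝ≥0∞) * δ = ∑ _s ∈ t, δ := by
              rw [Finset.sum_const, nsmul_eq_mul]
          _ ≤ ∑ s ∈ t, μ (ball s (ε/2)) :=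
              Finset.sum_le_sum (fun s hs => hlow s (ht hs))
          _ = μ (⋃ s ∈ t, ball s (ε/2)) :=
              (measure_biUnion_finset hdisj (fun s _ => measurableSet_ball)).symm
          _ ≤ Mb := by
              refine measure_mono ?_
              intro y hy
              simp only [Set.mem_iUnion] at hy
              obtain ⟨s, hs, hys⟩ := hy
              rw [mem_ball] at *
              have h1 : dist s x₀ < ρ := ht hs
              have h2 : dist y x₀ ≤ dist y s + dist s x₀ := dist_triangle _ _ _
              linarith
      have h2 : (t.card : ℝ≥0∞) ≤ Mb / δ :=
        (ENNReal.le_div_iff_mul_le (Or.inl hδpos.ne') (Or.inl hδtop)).2 hm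
      have h3 : (t.card : ℝ) ≤ (Mb / δ).toReal := by
        have hfin2 : Mb / δ ≠ ⊤ := (ENNReal.div_lt_top hMbfin.ne hδpos.ne').ne
        have := ENNReal.toReal_mono hfin2 h2
        simpa using this
      exact Nat.le_floor h3
    have hQ0 : Q 0 := ⟨∅, by simp, by simp, rfl⟩
    set n₀ : ℕ := Nat.findGreatest Q N with hn₀def
    have hQn₀ : Q n₀ := Nat.findGreatest_spec (Nat.zero_le N) hQ0
    obtain ⟨t₀, ht₀sub, ht₀sep, ht₀card⟩ := hQn₀
    refine ⟨↑t₀, t₀.finite_toSet, ?_⟩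
    intro x hx
    by_contra hxcov
    simp only [Set.mem_iUnion, mem_ball, not_exists, not_lt] at hxcov
    have hxnot : x ∉ t₀ := by
      intro hxin
      have := hxcov x hxin
      simp at this
      linarith
    have hins : Q (n₀ + 1) := by
      refine ⟨insert x t₀, ?_, ?_, ?_⟩
      · intro y hy
        rcases Finset.mem_insert.1 (by exact_mod_cast hy) with h | h
        · rwa [h]
        · exact ht₀sub h
      · intro a ha b hb hab
        rcases Finset.mem_insert.1 ha with ha' | ha' <;>
          rcases Finset.mem_insert.1 hb with hb' | hb'
        · exact absurd (ha'.trans hb'.symm) hab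
        · rw [ha']; exact hxcov b hb'
        · rw [hb', dist_comm]; exact hxcov a ha'
        · exact ht₀sep a ha' b hb' hab
      · rw [Finset.card_insert_of_notMem hxnot, ht₀card]
    have hle : n₀ + 1 ≤ N := by
      obtain ⟨t', h1, h2, h3⟩ := hins
      rw [← h3]
      exact hcard t' h1 h2
    have := Nat.le_findGreatest hle hins
    omega
  have hsep : ∀ n : ℕ, TopologicalSpace.IsSeparable (ball x₀ ((n:ℝ) + 1)) :=
    fun n => (htb _ (by positivity)).isSeparable
  have huniv : (Set.univ : Set X) = ⋃ n : ℕ, ball x₀ ((n:ℝ) + 1) := by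
    ext x
    simp only [Set.mem_univ, Set.mem_iUnion, mem_ball, true_iff]
    obtain ⟨n, hn⟩ := exists_nat_gt (dist x x₀)
    exact ⟨n, by linarith⟩
  refine TopologicalSpace.isSeparable_univ_iff.1 ?_
  rw [huniv]
  exact TopologicalSpace.IsSeparable.iUnion hsep

/-- **Logarithms of strong `A₁` weights are in little `bmo`.** If `ω : X₁ × X₂ → (0,∞)`
is locally integrable and satisfies `M_s ω ≤ C₀ ω` `μ`-a.e., then `log ω` belongs to little
`bmo(X₁ × X₂)`, with norm bounded by a constant depending only on `C₀` and the doubling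
constants. -/
theorem log_strong_a1_in_little_bmo
    {X₁ : Type*} [MetricSpace X₁] [MeasurableSpace X₁] [BorelSpace X₁]
    {X₂ : Type*} [MetricSpace X₂] [MeasurableSpace X₂] [BorelSpace X₂]
    (μ₁ : Measure X₁) (μ₂ : Measure X₂) [SigmaFinite μ₁] [SigmaFinite μ₂]
    (Cμ₁ Cμ₂ : ℝ) (hCμ₁ : 1 ≤ Cμ₁) (hCμ₂ : 1 ≤ Cμ₂)
    (hdbl₁ : ∀ (x : X₁) (r : ℝ), 0 < r →
      μ₁ (ball x (2 * r)) ≤ ENNReal.ofReal Cμ₁ * μ₁ (ball x r))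
    (hpos₁ : ∀ (x : X₁) (r : ℝ), 0 < r → 0 < μ₁ (ball x r))
    (hfin₁ : ∀ (x : X₁) (r : ℝ), 0 < r → μ₁ (ball x r) < ⊤)
    (hdbl₂ : ∀ (x : X₂) (r : ℝ), 0 < r →
      μ₂ (ball x (2 * r)) ≤ ENNReal.ofReal Cμ₂ * μ₂ (ball x r))
    (hpos₂ : ∀ (x : X₂) (r : ℝ), 0 < r → 0 < μ₂ (ball x r))
    (hfin₂ : ∀ (x : X₂) (r : ℝ), 0 < r → μ₂ (ball x r) < ⊤)
    (ω : X₁ × X₂ → ℝ) (hω0 : ∀ p, 0 < ω p)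
    (hωloc : LocallyIntegrable ω (μ₁.prod μ₂))
    (C₀ : ℝ) (hC₀ : 0 < C₀)
    (hA1s : ∀ᵐ p ∂(μ₁.prod μ₂),
      strongMaxFnE (μ₁.prod μ₂) (fun q => ENNReal.ofReal (ω q)) p ≤
        ENNReal.ofReal (C₀ * ω p)) :
    ∃ C : ℝ, 0 < C ∧
      LocallyIntegrable (fun p => Real.log (ω p)) (μ₁.prod μ₂) ∧
      ∀ (x₁ : X₁) (r₁ : ℝ) (x₂ : X₂) (r₂ : ℝ), 0 < r₁ → 0 < r₂ →
        meanOsc (μ₁.prod μ₂) (fun p => Real.log (ω p))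
          (ball x₁ r₁ ×ˢ ball x₂ r₂) ≤ C := by
  classical
  haveI : TopologicalSpace.SeparableSpace X₁ :=
    separable_of_doubling_aux μ₁ Cμ₁ hCμ₁ hdbl₁ hpos₁ hfin₁
  haveI : TopologicalSpace.SeparableSpace X₂ :=
    separable_of_doubling_aux μ₂ Cμ₂ hCμ₂ hdbl₂ hpos₂ hfin₂
  haveI : SecondCountableTopology X₁ := UniformSpace.secondCountable_of_separable X₁
  haveI : SecondCountableTopology X₂ := UniformSpace.secondCountable_of_separable X₂
  set μ := μ₁.prod μ₂ with hμdef
  set C₁ : ℝ := max C₀ 1 with hC₁def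
  have hC₁ : 1 ≤ C₁ := le_max_right _ _
  have hC₁pos : 0 < C₁ := lt_of_lt_of_le one_pos hC₁
  have hlogC₁ : 0 ≤ Real.log C₁ := Real.log_nonneg hC₁
  have hωmeas : AEStronglyMeasurable ω μ := hωloc.aestronglyMeasurable
  have hfmeas : AEStronglyMeasurable (fun p => Real.log (ω p)) μ :=
    by
      have h : AEMeasurable (fun p => Real.log (ω p)) μ :=
        Real.measurable_log.comp_aemeasurable hωmeas.aemeasurable
      exact h.aestronglyMeasurable
  have key : ∀ (x₁ : X₁) (r₁ : ℝ) (x₂ : X₂) (r₂ : ℝ), 0 < r₁ → 0 < r₂ →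
      IntegrableOn (fun p => Real.log (ω p)) (ball x₁ r₁ ×ˢ ball x₂ r₂) μ ∧
      meanOsc μ (fun p => Real.log (ω p)) (ball x₁ r₁ ×ˢ ball x₂ r₂) ≤
        4 * Real.log C₁ := by
    intro x₁ r₁ x₂ r₂ hr₁ hr₂
    set R : Set (X₁ × X₂) := ball x₁ r₁ ×ˢ ball x₂ r₂ with hRdef
    have hRmeas : MeasurableSet R := measurableSet_ball.prod measurableSet_ball
    have hμR : μ R = μ₁ (ball x₁ r₁) * μ₂ (ball x₂ r₂) := Measure.prod_prod _ _
    have hμRpos : 0 < μ R := by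
      rw [hμR]
      exact ENNReal.mul_pos (hpos₁ x₁ r₁ hr₁).ne' (hpos₂ x₂ r₂ hr₂).ne'
    have hμRfin : μ R < ⊤ := by
      rw [hμR]
      exact ENNReal.mul_lt_top (hfin₁ x₁ r₁ hr₁) (hfin₂ x₂ r₂ hr₂)
    haveI : IsFiniteMeasure (μ.restrict R) :=
      ⟨by simpa [measureReal_restrict_apply_univ, measureReal_def] using hμRfin⟩
    set m : ℝ := (μ R).toReal with hmdef
    have hmpos : 0 < m := ENNReal.toReal_pos hμRpos.ne' hμRfin.ne
    set L : ℝ≥0∞ := ∫⁻ q in R, ENNReal.ofReal (ω q) ∂μ with hLdef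
    have hae : ∀ᵐ p ∂μ.restrict R, (μ R)⁻¹ * L ≤ ENNReal.ofReal (C₀ * ω p) := by
      rw [ae_restrict_iff' hRmeas]
      filter_upwards [hA1s] with p hp hpR
      refine le_trans ?_ hp
      unfold strongMaxFnE
      refine le_iSup_of_le x₁ ?_
      refine le_iSup_of_le r₁ ?_
      refine le_iSup_of_le hr₁ ?_
      refine le_iSup_of_le x₂ ?_
      refine le_iSup_of_le r₂ ?_
      refine le_iSup_of_le hr₂ ?_
      exact le_iSup_of_le hpR le_rfl
    haveI : (ae (μ.restrict R)).NeBot :=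
      ae_neBot.2 (by simp [Measure.restrict_eq_zero, hμRpos.ne'])
    have hLfin : L ≠ ⊤ := by
      intro hLtop
      obtain ⟨p, hp⟩ := hae.exists
      rw [hLtop, ENNReal.mul_top (ENNReal.inv_ne_zero.2 hμRfin.ne)] at hp
      exact ENNReal.ofReal_ne_top (top_le_iff.1 hp)
    have hωint : IntegrableOn ω R μ := by
      refine ⟨hωmeas.restrict, ?_⟩
      rw [hasFiniteIntegral_iff_norm]
      have hcong : (∫⁻ a in R, ENNReal.ofReal ‖ω a‖ ∂μ) = L := by
        rw [hLdef]
        apply lintegral_congr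
        intro a
        rw [Real.norm_eq_abs, abs_of_pos (hω0 a)]
      rw [hcong]
      exact hLfin.lt_top
    set I : ℝ := ∫ q in R, ω q ∂μ with hIdef
    have hIL : ENNReal.ofReal I = L :=
      MeasureTheory.ofReal_integral_eq_lintegral_ofReal hωint
        (ae_of_all _ fun q => (hω0 q).le)
    have hIpos : 0 < I := by
      rw [hIdef, setIntegral_pos_iff_support_of_nonneg_ae
        (ae_of_all _ fun q => (hω0 q).le) hωint]
      have hsupp : Function.support ω = Set.univ :=
        Set.eq_univ_of_forall fun q => (hω0 q).ne'
      rw [hsupp, Set.univ_inter]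
      exact hμRpos
    set A : ℝ := m⁻¹ * I with hAdef
    have hApos : 0 < A := mul_pos (inv_pos.2 hmpos) hIpos
    have hkeyA : (μ R)⁻¹ * L = ENNReal.ofReal A := by
      have h1 : (μ R)⁻¹ = ENNReal.ofReal m⁻¹ := by
        rw [ENNReal.ofReal_inv_of_pos hmpos, hmdef, ENNReal.ofReal_toReal hμRfin.ne]
      rw [h1, ← hIL, ← ENNReal.ofReal_mul (inv_nonneg.2 hmpos.le), hAdef]
    have hA1' : ∀ᵐ p ∂μ.restrict R, A ≤ C₁ * ω p := by
      filter_upwards [hae] with p hp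
      rw [hkeyA] at hp
      have h2 : A ≤ C₀ * ω p :=
        (ENNReal.ofReal_le_ofReal_iff (mul_nonneg hC₀.le (hω0 p).le)).1 hp
      exact h2.trans (mul_le_mul_of_nonneg_right (le_max_left _ _) (hω0 p).le)
    -- integrability of log ω on R
    set ε : ℝ := A / C₁ with hεdef
    have hεpos : 0 < ε := div_pos hApos hC₁pos
    have hbound : ∀ᵐ p ∂μ.restrict R,
        ‖Real.log (ω p)‖ ≤ ω p + |Real.log ε| := by
      filter_upwards [hA1'] with p hp
      have hωε : ε ≤ ω p := by
        rw [hεdef, div_le_iff₀ hC₁pos]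
        linarith [hp, mul_comm C₁ (ω p)]
      rw [Real.norm_eq_abs]
      rw [abs_le]
      constructor
      · have h1 : Real.log ε ≤ Real.log (ω p) := Real.log_le_log hεpos hωε
        have h2 : -|Real.log ε| ≤ Real.log ε := neg_abs_le _
        have h3 : (0:ℝ) < ω p := hω0 p
        linarith
      · have h1 : Real.log (ω p) ≤ ω p - 1 := Real.log_le_sub_one_of_pos (hω0 p)
        have h2 : (0:ℝ) ≤ |Real.log ε| := abs_nonneg _
        linarith
    have hfint : IntegrableOn (fun p => Real.log (ω p)) R μ := by
      refine Integrable.mono' (hωint.add (integrable_const |Real.log ε|))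
        hfmeas.restrict hbound
    refine ⟨hfint, ?_⟩
    -- Jensen via tangent line: ∫ log ω ≤ m * log A
    have hJ : (∫ q in R, Real.log (ω q) ∂μ) ≤ m * Real.log A := by
      have hgint : Integrable (fun q => (Real.log A - 1) + ω q / A) (μ.restrict R) :=
        (integrable_const _).add (hωint.div_const A)
      have hpt : ∀ q, Real.log (ω q) ≤ (Real.log A - 1) + ω q / A := by
        intro q
        have h1 : Real.log (ω q / A) ≤ ω q / A - 1 :=
          Real.log_le_sub_one_of_pos (div_pos (hω0 q) hApos)
        rw [Real.log_div (hω0 q).ne' hApos.ne'] at h1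
        linarith
      have hmono := integral_mono hfint hgint hpt
      rw [integral_add (integrable_const _) (hωint.div_const A), integral_const,
        integral_div, measureReal_restrict_apply_univ, measureReal_def] at hmono
      have hIA : I / A = m := by
        rw [div_eq_iff hApos.ne', hAdef]
        field_simp
      rw [← hIdef, ← hmdef, hIA, smul_eq_mul] at hmono
      nlinarith [hmono]
    set c : ℝ := Real.log A with hcdef
    set D : ℝ := ∫ p in R, |Real.log (ω p) - c| ∂μ with hDdef
    have hsubint : Integrable (fun p => Real.log (ω p) - c) (μ.restrict R) :=
      hfint.sub (integrable_const c)
    have hDint : Integrable (fun p => |Real.log (ω p) - c|) (μ.restrict R) :=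
      hsubint.abs
    have hposint : Integrable (fun p => max (c - Real.log (ω p)) 0) (μ.restrict R) :=
      by simpa using ((integrable_const c).sub hfint).pos_part
    have hmaxle : ∀ᵐ p ∂μ.restrict R,
        max (c - Real.log (ω p)) 0 ≤ Real.log C₁ := by
      filter_upwards [hA1'] with p hp
      have h1 : Real.log A ≤ Real.log (C₁ * ω p) :=
        Real.log_le_log hApos hp
      rw [Real.log_mul hC₁pos.ne' (hω0 p).ne'] at h1
      exact max_le (by rw [hcdef]; linarith) hlogC₁
    have hDle : D ≤ 2 * (m * Real.log C₁) := by
      have hid : ∀ p, |Real.log (ω p) - c| =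
          (Real.log (ω p) - c) + 2 * max (c - Real.log (ω p)) 0 := by
        intro p
        rcases le_total c (Real.log (ω p)) with h | h
        · rw [abs_of_nonneg (by linarith), max_eq_right (by linarith)]; ring
        · rw [abs_of_nonpos (by linarith), max_eq_left (by linarith)]; ring
      have hDeq : D = (∫ p in R, (Real.log (ω p) - c) ∂μ) +
          2 * ∫ p in R, max (c - Real.log (ω p)) 0 ∂μ := by
        rw [hDdef]
        rw [integral_congr_ae (ae_of_all _ hid)]
        rw [integral_add hsubint (hposint.const_mul 2), integral_const_mul]
      have h1 : (∫ p in R, (Real.log (ω p) - c) ∂μ) ≤ 0 := by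
        rw [integral_sub hfint (integrable_const c), integral_const,
          measureReal_restrict_apply_univ, measureReal_def, ← hmdef, smul_eq_mul]
        rw [hcdef]; linarith
      have h2 : (∫ p in R, max (c - Real.log (ω p)) 0 ∂μ) ≤ m * Real.log C₁ := by
        have := integral_mono_ae hposint (integrable_const (Real.log C₁)) hmaxle
        rwa [integral_const, measureReal_restrict_apply_univ, measureReal_def, ← hmdef, smul_eq_mul] at this
      rw [hDeq]; linarith
    have hDnonneg : 0 ≤ D := by
      rw [hDdef]
      exact integral_nonneg fun p => abs_nonneg _
    -- conclude mean oscillation bound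
    set favg : ℝ := (μ R).toReal⁻¹ * ∫ q in R, Real.log (ω q) ∂μ with hfavgdef
    have hfavgc : |favg - c| ≤ m⁻¹ * D := by
      have h1 : favg - c = m⁻¹ * ∫ p in R, (Real.log (ω p) - c) ∂μ := by
        rw [integral_sub hfint (integrable_const c), integral_const,
          measureReal_restrict_apply_univ, measureReal_def, ← hmdef, smul_eq_mul, hfavgdef, ← hmdef]
        field_simp
      rw [h1, abs_mul, abs_of_nonneg (inv_nonneg.2 hmpos.le)]
      have h2 : |∫ p in R, (Real.log (ω p) - c) ∂μ| ≤ D := by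
        rw [hDdef]
        calc |∫ p in R, (Real.log (ω p) - c) ∂μ| = ‖∫ p in R, (Real.log (ω p) - c) ∂μ‖ := (Real.norm_eq_abs _).symm
          _ ≤ ∫ p in R, ‖Real.log (ω p) - c‖ ∂μ := norm_integral_le_integral_norm _
          _ = ∫ p in R, |Real.log (ω p) - c| ∂μ := by simp [Real.norm_eq_abs]
      exact mul_le_mul_of_nonneg_left h2 (inv_nonneg.2 hmpos.le)
    have hfinal : (∫ p in R, |Real.log (ω p) - favg| ∂μ) ≤ 2 * D := by
      have hptle : ∀ p, |Real.log (ω p) - favg| ≤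
          |Real.log (ω p) - c| + |favg - c| := by
        intro p
        calc |Real.log (ω p) - favg| ≤ |Real.log (ω p) - c| + |c - favg| :=
              abs_sub_le _ _ _
          _ = |Real.log (ω p) - c| + |favg - c| := by rw [abs_sub_comm c favg]
      have hsum : Integrable (fun p => |Real.log (ω p) - c| + |favg - c|)
          (μ.restrict R) := hDint.add (integrable_const _)
      have hint2 : Integrable (fun p => |Real.log (ω p) - favg|) (μ.restrict R) :=
        (hfint.sub (integrable_const favg)).abs
      have h3 := integral_mono hint2 hsum hptle
      rw [integral_add hDint (integrable_const _), integral_const,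
        measureReal_restrict_apply_univ, measureReal_def, ← hmdef, smul_eq_mul, ← hDdef] at h3
      have h4 : m * |favg - c| ≤ D := by
        have h := mul_le_mul_of_nonneg_left hfavgc hmpos.le
        rw [← mul_assoc, mul_inv_cancel₀ hmpos.ne', one_mul] at h
        exact h
      linarith
    unfold meanOsc
    rw [← hfavgdef, ← hmdef]
    calc m⁻¹ * ∫ p in R, |Real.log (ω p) - favg| ∂μ
        ≤ m⁻¹ * (2 * D) :=
          mul_le_mul_of_nonneg_left hfinal (inv_nonneg.2 hmpos.le)
      _ ≤ m⁻¹ * (2 * (2 * (m * Real.log C₁))) := by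
          have : (2:ℝ) * D ≤ 2 * (2 * (m * Real.log C₁)) := by linarith
          exact mul_le_mul_of_nonneg_left this (inv_nonneg.2 hmpos.le)
      _ = 4 * Real.log C₁ := by field_simp; ring
  refine ⟨4 * Real.log C₁ + 1, by linarith, ?_, ?_⟩
  · intro p
    exact ⟨ball p.1 1 ×ˢ ball p.2 1,
      prod_mem_nhds (ball_mem_nhds _ one_pos) (ball_mem_nhds _ one_pos),
      (key p.1 1 p.2 1 one_pos one_pos).1⟩
  · intro x₁ r₁ x₂ r₂ hr₁ hr₂
    have := (key x₁ r₁ x₂ r₂ hr₁ hr₂).2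
    linarith
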